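/- arXiv:1212.1444 — 4 statements merged into one kernel-verified Lean document; each statement's English description precedes it below -/
import Mathlib

section
/- For all real numbers a, μ, y and every h > 0, the integral of z ↦ sin(a(y − μh + z)) · exp(μ(y − μh + z)) with respect to the Gaussian measure on ℝ with mean 0 and variance h equals sin(a·y) · exp(μ·y) · exp(−(μ² + a²)·h/2). -/
open MeasureTheory ProbabilityTheory

open Complex in
open scoped NNReal ENNReal Real in
/-- For all real `a, μ, y` and every `h > 0`, the integral of
`z ↦ sin(a(y − μh + z)) · exp(μ(y − μh + z))` with respect to the Gaussian measure on `ℝ`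
with mean `0` and variance `h` equals `sin(a·y) · exp(μ·y) · exp(−(μ² + a²)·h/2)`. -/
theorem gaussian_integral_sin_exp (a μ y h : ℝ) (hh : 0 < h) :
    ∫ z, Real.sin (a * (y - μ * h + z)) * Real.exp (μ * (y - μ * h + z))
        ∂(gaussianReal 0 h.toNNReal)
      = Real.sin (a * y) * Real.exp (μ * y) * Real.exp (-((μ ^ 2 + a ^ 2) * h / 2)) := by
  have hv : h.toNNReal ≠ 0 := by
    simp [Real.toNNReal_eq_zero, not_le, hh]
  have hcoe : ((h.toNNReal : ℝ)) = h := Real.coe_toNNReal h hh.le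
  have hhC : (h : ℂ) ≠ 0 := by exact_mod_cast hh.ne'
  set c : ℝ := y - μ * h with hc
  set s : ℝ := Real.sqrt (2 * π * h) with hs
  have hspos : 0 < s := Real.sqrt_pos.mpr (by positivity)
  set w : ℂ := (μ : ℂ) + a * I with hw
  set b : ℂ := ((-(2 * h)⁻¹ : ℝ) : ℂ) with hb
  have hbre : b.re < 0 := by
    simp only [hb, Complex.ofReal_re]
    have : 0 < (2 * h)⁻¹ := by positivity
    linarith
  rw [gaussianReal_of_var_ne_zero 0 hv]
  have hpdf : gaussianPDF 0 h.toNNReal =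
      fun x ↦ ((Real.toNNReal (gaussianPDFReal 0 h.toNNReal x) : ℝ≥0) : ℝ≥0∞) := rfl
  rw [hpdf, integral_withDensity_eq_integral_smul
    ((measurable_gaussianPDFReal 0 h.toNNReal).real_toNNReal) _]
  have key : ∀ z : ℝ,
      (Real.toNNReal (gaussianPDFReal 0 h.toNNReal z)) •
        (Real.sin (a * (c + z)) * Real.exp (μ * (c + z)))
      = s⁻¹ * (Complex.exp (b * z ^ 2 + w * z + w * c)).im := by
    intro z
    have hpdfz : gaussianPDFReal 0 h.toNNReal z = s⁻¹ * Real.exp (-(z ^ 2) / (2 * h)) := by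
      rw [gaussianPDFReal]
      simp [hcoe, hs]
    have hre : (b * z ^ 2 + w * z + w * c).re = μ * (c + z) + -(z ^ 2) / (2 * h) := by
      simp only [hb, hw, Complex.add_re, Complex.mul_re, Complex.add_im, Complex.mul_im,
        ← Complex.ofReal_pow, Complex.ofReal_re, Complex.ofReal_im, Complex.I_re, Complex.I_im]
      ring
    have him : (b * z ^ 2 + w * z + w * c).im = a * (c + z) := by
      simp only [hb, hw, Complex.add_re, Complex.mul_re, Complex.add_im, Complex.mul_im,
        ← Complex.ofReal_pow, Complex.ofReal_re, Complex.ofReal_im, Complex.I_re, Complex.I_im]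
      ring
    rw [NNReal.smul_def, Real.coe_toNNReal _ (gaussianPDFReal_nonneg _ _ _), hpdfz,
      Complex.exp_im, hre, him, Real.exp_add, smul_eq_mul]
    ring
  simp_rw [key]
  rw [integral_const_mul]
  simp_rw [← RCLike.im_eq_complex_im]
  rw [integral_im (integrable_cexp_quadratic' hbre w (w * c)),
    integral_cexp_quadratic hbre w (w * c)]
  rw [RCLike.im_eq_complex_im]
  have h2 : ((π : ℂ) / -b) ^ (1 / 2 : ℂ) = (s : ℂ) := by
    have h1 : (π : ℂ) / -b = ((2 * π * h : ℝ) : ℂ) := by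
      rw [hb]
      push_cast
      rw [neg_neg]
      field_simp
    rw [h1, show (1/2 : ℂ) = ((1/2 : ℝ) : ℂ) by norm_num,
      ← Complex.ofReal_cpow (by positivity)]
    norm_cast
    rw [hs, Real.sqrt_eq_rpow]
  rw [h2]
  have h4 : (4 * b)⁻¹ = ((-(h / 2) : ℝ) : ℂ) := by
    rw [hb]
    push_cast
    field_simp
    ring
  have hE : w * (c : ℂ) - w ^ 2 / (4 * b) =
      ((μ * y + -((μ ^ 2 + a ^ 2) * h / 2) : ℝ) : ℂ) + ((a * y : ℝ) : ℂ) * I := by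
    rw [div_eq_mul_inv, h4]
    apply Complex.ext
    · simp only [hw, hc, Complex.add_re, Complex.mul_re, Complex.add_im, Complex.mul_im,
        Complex.sub_re, pow_two, Complex.ofReal_re, Complex.ofReal_im, Complex.I_re, Complex.I_im]
      ring
    · simp only [hw, hc, Complex.add_re, Complex.mul_re, Complex.add_im, Complex.mul_im,
        Complex.sub_im, pow_two, Complex.ofReal_re, Complex.ofReal_im, Complex.I_re, Complex.I_im]
      ring
  rw [hE]
  have h5 : ∀ x v : ℝ, (Complex.exp ((x : ℂ) + (v : ℂ) * I)).im = Real.exp x * Real.sin v := by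
    intro x v
    rw [Complex.exp_im]
    simp
  simp only [Complex.mul_im, Complex.ofReal_re, Complex.ofReal_im, h5, zero_mul, add_zero]
  rw [Real.exp_add]
  field_simp
end

section
/- Let K > 0, μ ≥ 0, β > 0, m > 1 and λ(K) = (m−1)β − μ²/2 − π²/(2K²). Let F : ℝ → ℝ and let p : (0,K) → (0,1) be twice differentiable with (1/2)p''(x) − μp'(x) = F(1 − p(x)) for all x ∈ (0,K). Then f(x) := sin(πx/K) e^{μx} / p(x) satisfies, for all x ∈ (0,K), (1/2)f''(x) − (μ − p'(x)/p(x))·f'(x) + ((m−1)β + F(1−p(x))/p(x))·f(x) = λ(K)·f(x). -/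
/-- If `p : (0,K) → (0,1)` is twice differentiable with
`(1/2)p'' − μp' = F(1−p)` on `(0,K)`, then `f(x) = sin(πx/K)e^{μx}/p(x)` satisfies
`(1/2)f'' − (μ − p'/p)f' + ((m−1)β + F(1−p)/p)f = λ(K)f` on `(0,K)`, where
`λ(K) = (m−1)β − μ²/2 − π²/(2K²)`. -/
theorem backbone_eigenfunction (K μ β m : ℝ) (hK : 0 < K) (hμ : 0 ≤ μ) (hβ : 0 < β)
    (hm : 1 < m) (F : ℝ → ℝ) (p : ℝ → ℝ)
    (hp01 : ∀ x ∈ Set.Ioo 0 K, p x ∈ Set.Ioo (0:ℝ) 1)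
    (hp1 : ∀ x ∈ Set.Ioo 0 K, DifferentiableAt ℝ p x)
    (hp2 : ∀ x ∈ Set.Ioo 0 K, DifferentiableAt ℝ (deriv p) x)
    (hode : ∀ x ∈ Set.Ioo 0 K, (1/2) * deriv (deriv p) x - μ * deriv p x = F (1 - p x)) :
    ∀ x ∈ Set.Ioo 0 K,
      (1/2) * deriv (deriv (fun y => Real.sin (Real.pi * y / K) * Real.exp (μ * y) / p y)) x
        - (μ - deriv p x / p x) *
            deriv (fun y => Real.sin (Real.pi * y / K) * Real.exp (μ * y) / p y) x
        + ((m - 1) * β + F (1 - p x) / p x) *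
            (Real.sin (Real.pi * x / K) * Real.exp (μ * x) / p x)
      = ((m - 1) * β - μ ^ 2 / 2 - Real.pi ^ 2 / (2 * K ^ 2)) *
          (Real.sin (Real.pi * x / K) * Real.exp (μ * x) / p x) := by
  intro x hx
  have hK0 : K ≠ 0 := ne_of_gt hK
  have hpx : p x ≠ 0 := (hp01 x hx).1.ne'
  set f : ℝ → ℝ := fun y => Real.sin (Real.pi * y / K) * Real.exp (μ * y) / p y with hf
  set f1 : ℝ → ℝ := fun y =>
      ((Real.cos (Real.pi * y / K) * (Real.pi / K) * Real.exp (μ * y)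
          + Real.sin (Real.pi * y / K) * (Real.exp (μ * y) * μ)) * p y
        - Real.sin (Real.pi * y / K) * Real.exp (μ * y) * deriv p y) / p y ^ 2 with hf1
  have harg : ∀ y : ℝ, HasDerivAt (fun z => Real.pi * z / K) (Real.pi / K) y := by
    intro y
    simpa using ((hasDerivAt_id y).const_mul Real.pi).div_const K
  have hs : ∀ y : ℝ, HasDerivAt (fun z => Real.sin (Real.pi * z / K))
      (Real.cos (Real.pi * y / K) * (Real.pi / K)) y := fun y =>
    (Real.hasDerivAt_sin _).comp y (harg y)
  have hc : ∀ y : ℝ, HasDerivAt (fun z => Real.cos (Real.pi * z / K))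
      (-Real.sin (Real.pi * y / K) * (Real.pi / K)) y := fun y =>
    (Real.hasDerivAt_cos _).comp y (harg y)
  have he : ∀ y : ℝ, HasDerivAt (fun z => Real.exp (μ * z)) (Real.exp (μ * y) * μ) y := by
    intro y
    have h2 : HasDerivAt (fun z => μ * z) μ y := by simpa using (hasDerivAt_id y).const_mul μ
    exact (Real.hasDerivAt_exp _).comp y h2
  have key : ∀ y ∈ Set.Ioo (0:ℝ) K, HasDerivAt f (f1 y) y := by
    intro y hy
    have hpy : p y ≠ 0 := (hp01 y hy).1.ne'
    exact ((hs y).mul (he y)).div ((hp1 y hy).hasDerivAt) hpy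
  have hd1 : deriv f x = f1 x := (key x hx).deriv
  have heq : deriv f =ᶠ[nhds x] f1 :=
    Filter.eventuallyEq_of_mem (isOpen_Ioo.mem_nhds hx) (fun y hy => (key y hy).deriv)
  have hd2 : deriv (deriv f) x = deriv f1 x := heq.deriv_eq
  have hp' : HasDerivAt p (deriv p x) x := (hp1 x hx).hasDerivAt
  have hp'' : HasDerivAt (deriv p) (deriv (deriv p) x) x := (hp2 x hx).hasDerivAt
  have ht1 : HasDerivAt (fun y => Real.cos (Real.pi * y / K) * (Real.pi / K) * Real.exp (μ * y))
      ((-Real.sin (Real.pi * x / K) * (Real.pi / K)) * (Real.pi / K) * Real.exp (μ * x)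
        + Real.cos (Real.pi * x / K) * (Real.pi / K) * (Real.exp (μ * x) * μ)) x :=
    ((hc x).mul_const (Real.pi / K)).mul (he x)
  have ht2 : HasDerivAt (fun y => Real.sin (Real.pi * y / K) * (Real.exp (μ * y) * μ))
      (Real.cos (Real.pi * x / K) * (Real.pi / K) * (Real.exp (μ * x) * μ)
        + Real.sin (Real.pi * x / K) * (Real.exp (μ * x) * μ * μ)) x :=
    (hs x).mul ((he x).mul_const μ)
  have hnum : HasDerivAt (fun y =>
      (Real.cos (Real.pi * y / K) * (Real.pi / K) * Real.exp (μ * y)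
          + Real.sin (Real.pi * y / K) * (Real.exp (μ * y) * μ)) * p y
        - Real.sin (Real.pi * y / K) * Real.exp (μ * y) * deriv p y)
      (((((-Real.sin (Real.pi * x / K) * (Real.pi / K)) * (Real.pi / K) * Real.exp (μ * x)
          + Real.cos (Real.pi * x / K) * (Real.pi / K) * (Real.exp (μ * x) * μ))
        + (Real.cos (Real.pi * x / K) * (Real.pi / K) * (Real.exp (μ * x) * μ)
          + Real.sin (Real.pi * x / K) * (Real.exp (μ * x) * μ * μ))) * p x
        + (Real.cos (Real.pi * x / K) * (Real.pi / K) * Real.exp (μ * x)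
          + Real.sin (Real.pi * x / K) * (Real.exp (μ * x) * μ)) * deriv p x)
        - ((Real.cos (Real.pi * x / K) * (Real.pi / K) * Real.exp (μ * x)
          + Real.sin (Real.pi * x / K) * (Real.exp (μ * x) * μ)) * deriv p x
          + Real.sin (Real.pi * x / K) * Real.exp (μ * x) * deriv (deriv p) x)) x :=
    ((ht1.add ht2).mul hp').sub (((hs x).mul (he x)).mul hp'')
  have hpsq : HasDerivAt (fun y => p y ^ 2) (2 * p x ^ 1 * deriv p x) x := hp'.pow 2
  have hF1 := hnum.div hpsq (pow_ne_zero 2 hpx)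
  have hd3 : deriv f1 x = _ := hF1.deriv
  rw [hd2, hd3, hd1]
  simp only [hf1]
  rw [← hode x hx]
  have hex : Real.exp (μ * x) ≠ 0 := Real.exp_ne_zero _
  field_simp
  ring
end

section
/- Let K > 0, μ ≥ 0, β > 0, m > 1 and λ(K) = (m−1)β − μ²/2 − π²/(2K²). Let F : ℝ → ℝ be continuous and let p : [0,K] → ℝ be continuously differentiable on [0,K] and twice continuously differentiable on (0,K), with p(0) = p(K) = 0, 0 < p(x) < 1 for all x ∈ (0,K), and (1/2)p''(x) − μp'(x) = F(1 − p(x)) on (0,K). Assume moreover that f*(x) := sin(πx/K)·e^{μx}/p(x) is bounded on (0,K). Then λ(K) ≤ ∫₀^K ((m−1)β + F(1−p(y))/p(y)) · (2/K)·sin²(πy/K) dy. -/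
open MeasureTheory Set Filter Topology intervalIntegral

set_option maxHeartbeats 3200000

/-- Lemma 4.7 in deterministic form: with `λ(K) = (m−1)β − μ²/2 − π²/(2K²)`, `F` continuous,
`p` C¹ on `[0,K]` and C² on `(0,K)` with `p(0) = p(K) = 0`, `0 < p < 1` on `(0,K)`,
`(1/2)p'' − μp' = F(1−p)` on `(0,K)`, and `f*(x) = sin(πx/K)e^{μx}/p(x)` bounded on `(0,K)`,
one has `λ(K) ≤ ∫₀^K ((m−1)β + F(1−p(y))/p(y))·(2/K)sin²(πy/K) dy`. -/
theorem growth_rate_upper_bound (K μ β m : ℝ) (hK : 0 < K) (hμ : 0 ≤ μ) (hβ : 0 < β)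
    (hm : 1 < m) (F : ℝ → ℝ) (hF : Continuous F) (p : ℝ → ℝ)
    (hp1 : ContDiffOn ℝ 1 p (Set.Icc 0 K))
    (hp2 : ContDiffOn ℝ 2 p (Set.Ioo 0 K))
    (hp0 : p 0 = 0) (hpK : p K = 0)
    (hp01 : ∀ x ∈ Set.Ioo 0 K, p x ∈ Set.Ioo (0:ℝ) 1)
    (hode : ∀ x ∈ Set.Ioo 0 K, (1/2) * deriv (deriv p) x - μ * deriv p x = F (1 - p x))
    (hfb : ∃ C : ℝ, ∀ x ∈ Set.Ioo 0 K,
      |Real.sin (Real.pi * x / K) * Real.exp (μ * x) / p x| ≤ C) :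
    (m - 1) * β - μ ^ 2 / 2 - Real.pi ^ 2 / (2 * K ^ 2)
      ≤ ∫ y in (0:ℝ)..K,
          ((m - 1) * β + F (1 - p y) / p y) * ((2 / K) * Real.sin (Real.pi * y / K) ^ 2) := by
  obtain ⟨C, hC⟩ := hfb
  have hπ : (0:ℝ) < Real.pi := Real.pi_pos
  have hKne : K ≠ 0 := ne_of_gt hK
  set k : ℝ := Real.pi / K with hk
  have hkpos : 0 < k := div_pos hπ hK
  set lam0 : ℝ := -(μ^2/2) - k^2/2 with hlam0
  set S : ℝ → ℝ := fun x => Real.sin (Real.pi * x / K) with hSdef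
  set Co : ℝ → ℝ := fun x => Real.cos (Real.pi * x / K) with hCodef
  have hinner : Continuous fun x : ℝ => Real.pi * x / K :=
    (continuous_const.mul continuous_id).div_const K
  have hScont : Continuous S := Real.continuous_sin.comp hinner
  have hCocont : Continuous Co := Real.continuous_cos.comp hinner
  have hinnerD : ∀ x : ℝ, HasDerivAt (fun y : ℝ => Real.pi * y / K) k x := by
    intro x
    simpa [hk] using ((hasDerivAt_id x).const_mul Real.pi).div_const K
  have hSderiv : ∀ x : ℝ, HasDerivAt S (Co x * k) x := fun x =>
    (Real.hasDerivAt_sin _).comp x (hinnerD x)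
  have hCoderiv : ∀ x : ℝ, HasDerivAt Co (-S x * k) x := fun x =>
    (Real.hasDerivAt_cos _).comp x (hinnerD x)
  have hSpos : ∀ x ∈ Set.Ioo 0 K, 0 < S x := by
    intro x hx
    apply Real.sin_pos_of_pos_of_lt_pi
    · have := hx.1; positivity
    · rw [div_lt_iff₀ hK]
      nlinarith [hx.2]
  have hSle : ∀ x : ℝ, |S x| ≤ 1 := fun x => Real.abs_sin_le_one _
  have hCole : ∀ x : ℝ, |Co x| ≤ 1 := fun x => Real.abs_cos_le_one _
  -- facts about p
  have hIooIcc : Set.Ioo 0 K ⊆ Set.Icc (0:ℝ) K := Set.Ioo_subset_Icc_self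
  have hpne : ∀ x ∈ Set.Ioo 0 K, p x ≠ 0 := fun x hx => ne_of_gt (hp01 x hx).1
  have hpcontIoo : ContinuousOn p (Set.Ioo 0 K) := hp1.continuousOn.mono hIooIcc
  have hpd : ∀ x ∈ Set.Ioo 0 K, HasDerivAt p (deriv p x) x := by
    intro x hx
    exact ((hp1.differentiableOn one_ne_zero).differentiableAt
      (Icc_mem_nhds hx.1 hx.2)).hasDerivAt
  have hc1 : ContDiffOn ℝ 1 (deriv p) (Set.Ioo 0 K) :=
    hp2.deriv_of_isOpen isOpen_Ioo (by norm_num)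
  have hpd2 : ∀ x ∈ Set.Ioo 0 K, HasDerivAt (deriv p) (deriv (deriv p) x) x := fun x hx =>
    ((hc1.differentiableOn one_ne_zero).differentiableAt (Ioo_mem_nhds hx.1 hx.2)).hasDerivAt
  have hp'cont : ContinuousOn (deriv p) (Set.Ioo 0 K) := hc1.continuousOn
  obtain ⟨M, hM⟩ : ∃ M, ∀ x ∈ Set.Ioo 0 K, |deriv p x| ≤ M := by
    obtain ⟨M, hM⟩ := isCompact_Icc.exists_bound_of_continuousOn
      (hp1.continuousOn_derivWithin (uniqueDiffOn_Icc hK) le_rfl)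
    refine ⟨M, fun x hx => ?_⟩
    have h2 : derivWithin p (Set.Icc 0 K) x = deriv p x :=
      derivWithin_of_mem_nhds (Icc_mem_nhds hx.1 hx.2)
    simpa [Real.norm_eq_abs, h2] using hM x (hIooIcc hx)
  have hmemhalf : K/2 ∈ Set.Ioo (0:ℝ) K := ⟨by positivity, by linarith⟩
  have hC0 : 0 ≤ C := le_trans (abs_nonneg _) (hC _ hmemhalf)
  have hM0 : 0 ≤ M := le_trans (abs_nonneg _) (hM _ hmemhalf)
  -- auxiliary functions
  set P : ℝ → ℝ := fun x => deriv p x / p x with hP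
  set w : ℝ → ℝ := fun x => S x * S x * P x - μ * (S x * S x) - k * (S x * Co x) with hw
  set E : ℝ → ℝ := fun x => 2 * (S x * S x) * (F (1 - p x) / p x) - 2 * lam0 * (S x * S x)
      - (S x * P x - μ * S x - k * Co x)^2 with hE
  set Psi : ℝ → ℝ := fun y => (2 / K) * Real.sin (Real.pi * y / K) ^ 2 with hPsi
  set G : ℝ → ℝ := fun y => F (1 - p y) / p y * Psi y with hG
  have hPsicont : Continuous Psi := continuous_const.mul (hScont.pow 2)
  have hPcont : ContinuousOn P (Set.Ioo 0 K) := hp'cont.div hpcontIoo hpne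
  have hGcont : ContinuousOn G (Set.Ioo 0 K) :=
    (((hF.comp_continuousOn (continuousOn_const.sub hpcontIoo))).div hpcontIoo hpne).mul
      hPsicont.continuousOn
  -- derivative of w
  have hwE : ∀ x ∈ Set.Ioo 0 K, HasDerivAt w (E x) x := by
    intro x hx
    have hpx := hpne x hx
    have hPd : HasDerivAt P
        ((deriv (deriv p) x * p x - deriv p x * deriv p x) / p x ^ 2) x :=
      (hpd2 x hx).div (hpd x hx) hpx
    have hSS : HasDerivAt (fun y => S y * S y) (Co x * k * S x + S x * (Co x * k)) x :=
      (hSderiv x).mul (hSderiv x)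
    have hSC : HasDerivAt (fun y => S y * Co y) (Co x * k * Co x + S x * (-S x * k)) x :=
      (hSderiv x).mul (hCoderiv x)
    have hD : HasDerivAt w (((Co x * k * S x + S x * (Co x * k)) * P x
        + (S x * S x) * ((deriv (deriv p) x * p x - deriv p x * deriv p x) / p x ^ 2))
        - μ * (Co x * k * S x + S x * (Co x * k))
        - k * (Co x * k * Co x + S x * (-S x * k))) x :=
      ((hSS.mul hPd).sub (hSS.const_mul μ)).sub (hSC.const_mul k)
    convert hD using 1
    have hFx : F (1 - p x) = (1/2) * deriv (deriv p) x - μ * deriv p x := (hode x hx).symm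
    simp only [hE, hP, hlam0, hFx]
    field_simp
    ring
  -- the key inequality on compact subintervals
  have key : ∀ a b : ℝ, a ∈ Set.Ioo 0 K → b ∈ Set.Ioo 0 K → a ≤ b →
      lam0 * (∫ y in a..b, Psi y) + (1/K) * (w b - w a) ≤ ∫ y in a..b, G y := by
    intro a b ha hb hab
    have hsub : Set.Icc a b ⊆ Set.Ioo 0 K := fun x hx =>
      ⟨lt_of_lt_of_le ha.1 hx.1, lt_of_le_of_lt hx.2 hb.2⟩
    have huIcc : Set.uIcc a b = Set.Icc a b := Set.uIcc_of_le hab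
    have hEcont : ContinuousOn E (Set.Ioo 0 K) := by
      apply ContinuousOn.sub
      apply ContinuousOn.sub
      · exact (continuousOn_const.mul (hScont.continuousOn.mul hScont.continuousOn)).mul
          ((hF.comp_continuousOn (continuousOn_const.sub hpcontIoo)).div hpcontIoo hpne)
      · exact continuousOn_const.mul (hScont.continuousOn.mul hScont.continuousOn)
      · exact (((hScont.continuousOn.mul hPcont).sub
          (continuousOn_const.mul hScont.continuousOn)).sub
          (continuousOn_const.mul hCocont.continuousOn)).pow 2
    have hEint : IntervalIntegrable E volume a b := by
      apply ContinuousOn.intervalIntegrable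
      rw [huIcc]; exact hEcont.mono hsub
    have hftc : ∫ y in a..b, E y = w b - w a := by
      apply integral_eq_sub_of_hasDerivAt (fun x hx => hwE x (hsub (huIcc ▸ hx))) hEint
    have hGintab : IntervalIntegrable G volume a b := by
      apply ContinuousOn.intervalIntegrable
      rw [huIcc]; exact hGcont.mono hsub
    have hPsiintab : IntervalIntegrable Psi volume a b := hPsicont.intervalIntegrable _ _
    have hmono : ∫ y in a..b, (1/K) * E y ≤ ∫ y in a..b, (G y - lam0 * Psi y) := by
      apply integral_mono_on hab (hEint.const_mul _)
        (hGintab.sub (hPsiintab.const_mul lam0))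
      intro x hx
      have hx' := hsub hx
      have hpx := hpne x hx'
      have h1 : (1/K) * E x
          = G x - lam0 * Psi x - (1/K) * (S x * P x - μ * S x - k * Co x)^2 := by
        simp only [hE, hG, hPsi, hSdef]
        field_simp
      have h2 : 0 ≤ (1/K) * (S x * P x - μ * S x - k * Co x)^2 := by positivity
      linarith
    rw [intervalIntegral.integral_const_mul, hftc] at hmono
    rw [intervalIntegral.integral_sub hGintab (hPsiintab.const_mul lam0),
      intervalIntegral.integral_const_mul] at hmono
    linarith
  -- sequences approaching the endpoints
  set aseq : ℕ → ℝ := fun n => K / (n + 2) with haseq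
  set bseq : ℕ → ℝ := fun n => K - K / (n + 2) with hbseq
  have hn2 : ∀ n : ℕ, (0:ℝ) < (n:ℝ) + 2 := fun n => by positivity
  have haIoo : ∀ n, aseq n ∈ Set.Ioo 0 K := by
    intro n
    constructor
    · have := hn2 n; positivity
    · rw [haseq, div_lt_iff₀ (hn2 n)]
      nlinarith [Nat.cast_nonneg (α := ℝ) n]
  have hahalf : ∀ n, aseq n ≤ K / 2 := by
    intro n
    rw [haseq, div_le_div_iff₀ (hn2 n) (by norm_num : (0:ℝ) < 2)]
    nlinarith [Nat.cast_nonneg (α := ℝ) n]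
  have haleb : ∀ n, aseq n ≤ bseq n := by
    intro n
    have := hahalf n
    simp only [hbseq]
    simp only [haseq] at this ⊢
    linarith
  have hbIoo : ∀ n, bseq n ∈ Set.Ioo 0 K := by
    intro n
    have h1 := (haIoo n).1
    have h2 := (haIoo n).2
    simp only [hbseq]
    simp only [haseq] at h1 h2
    constructor <;> [linarith; linarith]
  have htopn : Tendsto (fun n : ℕ => (n:ℝ) + 2) atTop atTop :=
    tendsto_atTop_add_const_right atTop 2 tendsto_natCast_atTop_atTop
  have haseq0 : Tendsto aseq atTop (𝓝 0) := tendsto_const_nhds.div_atTop htopn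
  have hbseqK : Tendsto bseq atTop (𝓝 K) := by
    simpa using tendsto_const_nhds.sub haseq0
  -- bound for w near the endpoints
  have hwbd : ∀ x ∈ Set.Ioo 0 K, |w x| ≤ (C * M + μ + k) * S x := by
    intro x hx
    have hpx := hpne x hx
    have h1 : S x * P x
        = (S x * Real.exp (μ * x) / p x) * (Real.exp (-(μ * x)) * deriv p x) := by
      rw [Real.exp_neg]
      simp only [hP]
      field_simp
    have h2 : |S x * P x| ≤ C * M := by
      rw [h1, abs_mul]
      have e1 : |S x * Real.exp (μ * x) / p x| ≤ C := hC x hx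
      have e2 : |Real.exp (-(μ * x)) * deriv p x| ≤ 1 * M := by
        rw [abs_mul]
        apply mul_le_mul _ (hM x hx) (abs_nonneg _) zero_le_one
        rw [abs_of_pos (Real.exp_pos _)]
        exact Real.exp_le_one_iff.2 (by nlinarith [hx.1])
      calc |S x * Real.exp (μ * x) / p x| * |Real.exp (-(μ * x)) * deriv p x|
          ≤ C * (1 * M) := mul_le_mul e1 e2 (abs_nonneg _) hC0
        _ = C * M := by ring
    have h3 : |μ * S x| ≤ μ := by
      rw [abs_mul, abs_of_nonneg hμ]
      nlinarith [hSle x, abs_nonneg (S x)]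
    have h4 : |k * Co x| ≤ k := by
      rw [abs_mul, abs_of_pos hkpos]
      nlinarith [hCole x, abs_nonneg (Co x)]
    have h5 : w x = S x * (S x * P x - μ * S x - k * Co x) := by
      simp only [hw]; ring
    rw [h5, abs_mul, abs_of_pos (hSpos x hx), mul_comm ((C:ℝ) * M + μ + k) (S x)]
    apply mul_le_mul_of_nonneg_left _ (le_of_lt (hSpos x hx))
    have u1 := abs_sub (S x * P x - μ * S x) (k * Co x)
    have u2 := abs_sub (S x * P x) (μ * S x)
    linarith
  have hS0 : S 0 = 0 := by simp [hSdef]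
  have hSK : S K = 0 := by
    simp only [hSdef]
    rw [mul_div_assoc, div_self hKne, mul_one, Real.sin_pi]
  have hwa0 : Tendsto (fun n => w (aseq n)) atTop (𝓝 0) := by
    apply squeeze_zero_norm (f := fun n => w (aseq n)) (a := fun n => (C * M + μ + k) * S (aseq n))
    · intro n
      simpa [Real.norm_eq_abs] using hwbd _ (haIoo n)
    · have h1 : Tendsto (fun n => S (aseq n)) atTop (𝓝 (S 0)) :=
        (hScont.tendsto 0).comp haseq0
      simpa [hS0] using h1.const_mul (C * M + μ + k)
  have hwb0 : Tendsto (fun n => w (bseq n)) atTop (𝓝 0) := by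
    apply squeeze_zero_norm (f := fun n => w (bseq n)) (a := fun n => (C * M + μ + k) * S (bseq n))
    · intro n
      simpa [Real.norm_eq_abs] using hwbd _ (hbIoo n)
    · have h1 : Tendsto (fun n => S (bseq n)) atTop (𝓝 (S K)) :=
        (hScont.tendsto K).comp hbseqK
      simpa [hSK] using h1.const_mul (C * M + μ + k)
  -- integrability of G on (0,K)
  obtain ⟨N, hN⟩ := isCompact_Icc.exists_bound_of_continuousOn
    (hF.continuousOn (s := Set.Icc (0:ℝ) 1))
  have hGbd : ∀ y ∈ Set.Ioo 0 K, ‖G y‖ ≤ N * (C * (2/K)) := by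
    intro y hy
    have hpy := hpne y hy
    have h1 : G y = F (1 - p y) * ((S y * Real.exp (μ * y) / p y)
        * ((2/K) * (S y * Real.exp (-(μ * y))))) := by
      simp only [hG, hPsi, hSdef]
      rw [Real.exp_neg]
      field_simp
    have hmem : (1 - p y) ∈ Set.Icc (0:ℝ) 1 :=
      ⟨by linarith [(hp01 y hy).2], by linarith [(hp01 y hy).1]⟩
    have e0 : ‖F (1 - p y)‖ ≤ N := hN _ hmem
    have hN0 : 0 ≤ N := le_trans (norm_nonneg _) e0
    have e1 : |S y * Real.exp (μ * y) / p y| ≤ C := hC y hy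
    have e2 : |(2/K) * (S y * Real.exp (-(μ * y)))| ≤ (2/K) := by
      rw [abs_mul, abs_mul, abs_of_pos (by positivity : (0:ℝ) < 2/K)]
      have : |S y| * |Real.exp (-(μ * y))| ≤ 1 := by
        have e3 : |Real.exp (-(μ * y))| ≤ 1 := by
          rw [abs_of_pos (Real.exp_pos _)]
          exact Real.exp_le_one_iff.2 (by nlinarith [hy.1])
        calc |S y| * |Real.exp (-(μ * y))| ≤ 1 * 1 :=
            mul_le_mul (hSle y) e3 (abs_nonneg _) zero_le_one
          _ = 1 := by ring
      have h2K : (0:ℝ) ≤ 2/K := by positivity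
      nlinarith [this, h2K]
    rw [h1, Real.norm_eq_abs, abs_mul, abs_mul]
    have e4 : |S y * Real.exp (μ * y) / p y| * |(2/K) * (S y * Real.exp (-(μ * y)))|
        ≤ C * (2/K) := mul_le_mul e1 e2 (abs_nonneg _) hC0
    exact mul_le_mul e0 e4 (by positivity) hN0
  have hGmeas : IntegrableOn G (Set.Ioo 0 K) := by
    apply Integrable.mono' (g := fun _ => N * (C * (2/K)))
      (integrableOn_const measure_Ioo_lt_top.ne)
      (hGcont.aestronglyMeasurable measurableSet_Ioo)
    exact (ae_restrict_mem measurableSet_Ioo).mono (fun y hy => hGbd y hy)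
  have hGintK : IntervalIntegrable G volume 0 K := by
    rw [intervalIntegrable_iff_integrableOn_Ioc_of_le hK.le,
      integrableOn_Ioc_iff_integrableOn_Ioo]
    exact hGmeas
  -- convergence of the integrals
  have hsetmono : Monotone (fun n => Set.Ioc (aseq n) (bseq n)) := by
    intro i j hij
    apply Set.Ioc_subset_Ioc
    · simp only [haseq]
      apply div_le_div_of_nonneg_left hK.le (hn2 i)
      have : (i:ℝ) ≤ (j:ℝ) := Nat.cast_le.2 hij
      linarith
    · simp only [hbseq]
      have : K / ((j:ℝ) + 2) ≤ K / ((i:ℝ) + 2) := by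
        apply div_le_div_of_nonneg_left hK.le (hn2 i)
        have : (i:ℝ) ≤ (j:ℝ) := Nat.cast_le.2 hij
        linarith
      linarith
  have hunion : (⋃ n, Set.Ioc (aseq n) (bseq n)) = Set.Ioo 0 K := by
    apply Set.Subset.antisymm
    · apply Set.iUnion_subset
      intro n x hx
      exact ⟨lt_trans (haIoo n).1 hx.1, lt_of_le_of_lt hx.2 (hbIoo n).2⟩
    · intro x hx
      have hδ : 0 < min x (K - x) := lt_min hx.1 (by linarith [hx.2])
      obtain ⟨n, hn⟩ := exists_nat_gt (K / min x (K - x))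
      refine Set.mem_iUnion.2 ⟨n, ?_, ?_⟩
      · have h1 : K / ((n:ℝ) + 2) < min x (K - x) := by
          rw [div_lt_iff₀ (hn2 n)]
          rw [div_lt_iff₀ hδ] at hn
          nlinarith [hδ]
        calc aseq n < min x (K - x) := h1
          _ ≤ x := min_le_left _ _
      · have h1 : K / ((n:ℝ) + 2) < min x (K - x) := by
          rw [div_lt_iff₀ (hn2 n)]
          rw [div_lt_iff₀ hδ] at hn
          nlinarith [hδ]
        have h2 : K / ((n:ℝ) + 2) < K - x := lt_of_lt_of_le h1 (min_le_right _ _)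
        simp only [hbseq, haseq]
        linarith
  have hGtend : Tendsto (fun n => ∫ y in aseq n..bseq n, G y) atTop
      (𝓝 (∫ y in (0:ℝ)..K, G y)) := by
    have h0 := tendsto_setIntegral_of_monotone (fun n => measurableSet_Ioc) hsetmono
      (f := G) (μ := volume) (by rw [hunion]; exact hGmeas)
    rw [hunion] at h0
    have heq2 : ∫ y in Set.Ioo 0 K, G y = ∫ y in (0:ℝ)..K, G y := by
      rw [intervalIntegral.integral_of_le hK.le, integral_Ioc_eq_integral_Ioo]
    rw [heq2] at h0
    apply h0.congr
    intro n
    exact (intervalIntegral.integral_of_le (haleb n)).symm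
  have hPsimeas : IntegrableOn Psi (Set.Ioo 0 K) :=
    (hPsicont.integrableOn_Icc).mono_set Set.Ioo_subset_Icc_self
  have hPsitend : Tendsto (fun n => ∫ y in aseq n..bseq n, Psi y) atTop
      (𝓝 (∫ y in (0:ℝ)..K, Psi y)) := by
    have h0 := tendsto_setIntegral_of_monotone (fun n => measurableSet_Ioc) hsetmono
      (f := Psi) (μ := volume) (by rw [hunion]; exact hPsimeas)
    rw [hunion] at h0
    have heq2 : ∫ y in Set.Ioo 0 K, Psi y = ∫ y in (0:ℝ)..K, Psi y := by
      rw [intervalIntegral.integral_of_le hK.le, integral_Ioc_eq_integral_Ioo]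
    rw [heq2] at h0
    apply h0.congr
    intro n
    exact (intervalIntegral.integral_of_le (haleb n)).symm
  -- total mass of Psi
  have hPsival : (∫ y in (0:ℝ)..K, Psi y) = 1 := by
    have hd : ∀ y ∈ Set.uIcc (0:ℝ) K, HasDerivAt
        (fun t => (2/K) * (t/2 - (K/(4*Real.pi)) * Real.sin (2*Real.pi*t/K))) (Psi y) y := by
      intro y _
      have h1 : HasDerivAt (fun t : ℝ => 2*Real.pi*t/K) (2*Real.pi/K) y := by
        simpa using ((hasDerivAt_id y).const_mul (2*Real.pi)).div_const K
      have h2 : HasDerivAt (fun t : ℝ => Real.sin (2*Real.pi*t/K))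
          (Real.cos (2*Real.pi*y/K) * (2*Real.pi/K)) y :=
        (Real.hasDerivAt_sin _).comp y h1
      have h3 := (((hasDerivAt_id y).div_const 2).sub (h2.const_mul (K/(4*Real.pi)))).const_mul
        (2/K)
      refine h3.congr_deriv ?_
      have hcos : Real.cos (2*Real.pi*y/K) = 2 * Real.cos (Real.pi*y/K)^2 - 1 := by
        rw [show 2*Real.pi*y/K = 2*(Real.pi*y/K) by ring, Real.cos_two_mul]
      simp only [hPsi]
      rw [Real.sin_sq, hcos]
      field_simp
      ring
    rw [integral_eq_sub_of_hasDerivAt hd (hPsicont.intervalIntegrable _ _)]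
    rw [show 2*Real.pi*K/K = 2*Real.pi by field_simp]
    simp [Real.sin_two_pi]
    exact hKne
  -- pass to the limit
  have hlimle : lam0 ≤ ∫ y in (0:ℝ)..K, G y := by
    have h1 : Tendsto (fun n => lam0 * (∫ y in aseq n..bseq n, Psi y)
        + (1/K) * (w (bseq n) - w (aseq n))) atTop
        (𝓝 (lam0 * 1 + (1/K) * (0 - 0))) := by
      apply Tendsto.add
      · rw [← hPsival] at *
        exact hPsitend.const_mul lam0
      · exact (hwb0.sub hwa0).const_mul (1/K)
    have h2 := le_of_tendsto_of_tendsto' h1 hGtend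
      (fun n => key _ _ (haIoo n) (hbIoo n) (haleb n))
    simpa using h2
  -- conclusion
  have hint1 : IntervalIntegrable (fun y => (m-1)*β * Psi y) volume 0 K :=
    (continuous_const.mul hPsicont).intervalIntegrable _ _
  have hsplit : (∫ y in (0:ℝ)..K,
      ((m - 1) * β + F (1 - p y) / p y) * ((2 / K) * Real.sin (Real.pi * y / K) ^ 2))
      = (m-1)*β * (∫ y in (0:ℝ)..K, Psi y) + (∫ y in (0:ℝ)..K, G y) := by
    rw [← intervalIntegral.integral_const_mul, ← intervalIntegral.integral_add hint1 hGintK]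
    apply intervalIntegral.integral_congr
    intro y _
    simp only [hPsi, hG]
    ring
  rw [hsplit, hPsival]
  have hfin : (m-1)*β - μ^2/2 - Real.pi^2/(2*K^2) = (m-1)*β * 1 + lam0 := by
    simp only [hlam0, hk]
    field_simp
    ring
  rw [hfin]
  linarith
end

section
/- Let β > 0 and let (qₙ)_{n≥0} be nonnegative real numbers with Σₙ qₙ = 1; set G(s) = Σₙ qₙ·sⁿ and F(s) = β(G(s) − s) for s ∈ [0,1]. Then for every p ∈ (0,1) and every s ∈ [0,1], (1/p)·(F(s·p + (1−p)) − (1−s)·F(1−p)) = β·Σ_{k≥2} (s^k − s)·p^{k−1}·(Σ_{n≥k} qₙ·C(n,k)·(1−p)^{n−k}), where C(n,k) denotes the binomial coefficient and all the series converge. -/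
/-- Auxiliary: `∑' k, f (k+2) = ∑' f - f 0 - f 1` for a summable real sequence. -/
lemma tsum_shift2 {f : ℕ → ℝ} (hf : Summable f) :
    ∑' k, f (k + 2) = (∑' k, f k) - f 0 - f 1 := by
  have h := hf.sum_add_tsum_nat_add 2
  have : ∑ i ∈ Finset.range 2, f i = f 0 + f 1 := by
    simp [Finset.sum_range_succ]
  linarith [h, this]

set_option maxHeartbeats 1000000 in
/-- Backbone branching mechanism identity: with `G(s) = Σ qₙ sⁿ`, `F(s) = β(G(s) − s)`,
for `p ∈ (0,1)` and `s ∈ [0,1]`,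
`(1/p)·(F(s·p + (1−p)) − (1−s)·F(1−p)) = β·Σ_{k≥2} (s^k − s)p^{k−1} Σ_{n≥k} qₙ C(n,k)(1−p)^{n−k}`,
and all the series converge. (The sum over `k ≥ 2` is indexed by `k + 2`, `k : ℕ`; note that
`C(n,k) = 0` for `n < k`, so the inner sums may be taken over all `n`.) -/
theorem blue_branching_mechanism (β : ℝ) (hβ : 0 < β) (q : ℕ → ℝ) (hq : ∀ n, 0 ≤ q n)
    (hsum : ∑' n, q n = 1) (p s : ℝ) (hp : p ∈ Set.Ioo (0:ℝ) 1) (hs : s ∈ Set.Icc (0:ℝ) 1) :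
    (∀ k : ℕ, 2 ≤ k → Summable (fun n : ℕ => q n * (n.choose k : ℝ) * (1 - p) ^ (n - k))) ∧
    Summable (fun k : ℕ => (s ^ (k + 2) - s) * p ^ (k + 1) *
      ∑' n : ℕ, q n * (n.choose (k + 2) : ℝ) * (1 - p) ^ (n - (k + 2))) ∧
    (1 / p) *
      ((β * ((∑' n : ℕ, q n * (s * p + (1 - p)) ^ n) - (s * p + (1 - p))))
        - (1 - s) * (β * ((∑' n : ℕ, q n * (1 - p) ^ n) - (1 - p))))
      = β * ∑' k : ℕ, (s ^ (k + 2) - s) * p ^ (k + 1) *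
          ∑' n : ℕ, q n * (n.choose (k + 2) : ℝ) * (1 - p) ^ (n - (k + 2)) := by
  obtain ⟨hp0, hp1⟩ := hp
  obtain ⟨hs0, hs1⟩ := hs
  have hx0 : (0:ℝ) ≤ 1 - p := by linarith
  have hpne : p ≠ 0 := ne_of_gt hp0
  have hq' : Summable q := by
    by_contra h
    rw [tsum_eq_zero_of_not_summable h] at hsum
    norm_num at hsum
  -- the full two-index family
  set F : ℕ × ℕ → ℝ :=
    fun nk => q nk.1 * (nk.1.choose nk.2 : ℝ) * p ^ nk.2 * (1 - p) ^ (nk.1 - nk.2) with hFdef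
  have hF0 : ∀ nk, 0 ≤ F nk := by
    rintro ⟨n, k⟩
    exact mul_nonneg (mul_nonneg (mul_nonneg (hq n) (Nat.cast_nonneg _))
      (pow_nonneg hp0.le _)) (pow_nonneg hx0 _)
  have hzero : ∀ n k, k ∉ Finset.range (n + 1) → F (n, k) = 0 := by
    intro n k hk
    have : n < k := by simpa [Finset.mem_range, Nat.lt_succ_iff, not_le] using hk
    simp [hFdef, Nat.choose_eq_zero_of_lt this]
  have hslice_summ : ∀ n, Summable (fun k => F (n, k)) := fun n =>
    summable_of_ne_finset_zero (s := Finset.range (n + 1)) (fun k hk => hzero n k hk)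
  have hslice_sum : ∀ n, ∑' k, F (n, k) = q n := by
    intro n
    rw [tsum_eq_sum (s := Finset.range (n + 1)) (fun k hk => hzero n k hk)]
    have hbin := add_pow p (1 - p) n
    have : ∑ k ∈ Finset.range (n + 1), F (n, k)
        = q n * ∑ k ∈ Finset.range (n + 1), p ^ k * (1 - p) ^ (n - k) * (n.choose k : ℝ) := by
      rw [Finset.mul_sum]; apply Finset.sum_congr rfl; intro k _
      simp only [hFdef]; ring
    rw [this, ← hbin]
    norm_num
  have hFsumm : Summable F := by
    rw [summable_prod_of_nonneg hF0]
    refine ⟨hslice_summ, ?_⟩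
    apply hq'.congr
    intro n; exact (hslice_sum n).symm
  -- summability of the columns
  have hA_summ : ∀ k : ℕ, Summable (fun n : ℕ => q n * (n.choose k : ℝ) * (1 - p) ^ (n - k)) := by
    intro k
    have h1 : Summable (fun n => F (n, k)) :=
      hFsumm.comp_injective (fun a b hab => by simpa using congrArg Prod.fst hab)
    apply (h1.mul_right (p ^ k)⁻¹).congr
    intro n
    simp only [hFdef]
    field_simp
  set A : ℕ → ℝ := fun k => ∑' n, q n * (n.choose k : ℝ) * (1 - p) ^ (n - k) with hAdef
  have hcol_sum : ∀ k, ∑' n, F (n, k) = p ^ k * A k := by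
    intro k
    rw [hAdef]
    rw [← tsum_mul_left]
    apply tsum_congr
    intro n
    simp only [hFdef]; ring
  -- the swapped family and summability of k ↦ p^k * A k
  have hFswap : Summable (fun kn : ℕ × ℕ => F (kn.2, kn.1)) := by
    have := hFsumm.prod_symm
    exact this.congr (fun kn => rfl)
  have hU_summ : Summable (fun k => p ^ k * A k) := by
    have h := ((summable_prod_of_nonneg (f := fun kn : ℕ × ℕ => F (kn.2, kn.1))
      (fun kn => hF0 _)).mp hFswap).2
    exact h.congr (fun k => hcol_sum k)
  have hU_sum : ∑' k, p ^ k * A k = 1 := by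
    have hswap : ∑' k, ∑' n, F (n, k) = ∑' n, ∑' k, F (n, k) :=
      Summable.tsum_comm' hFsumm (fun n => hslice_summ n)
        (fun k => hFsumm.comp_injective (fun a b hab => by simpa using congrArg Prod.fst hab))
    calc ∑' k, p ^ k * A k = ∑' k, ∑' n, F (n, k) := by
          exact tsum_congr (fun k => (hcol_sum k).symm)
      _ = ∑' n, ∑' k, F (n, k) := hswap
      _ = ∑' n, q n := tsum_congr hslice_sum
      _ = 1 := hsum
  -- the s-weighted family
  set H : ℕ × ℕ → ℝ := fun nk => s ^ nk.2 * F nk with hHdef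
  have hH0 : ∀ nk, 0 ≤ H nk := fun nk => mul_nonneg (pow_nonneg hs0 _) (hF0 nk)
  have hHle : ∀ nk, H nk ≤ F nk := by
    intro nk
    have : s ^ nk.2 ≤ 1 := pow_le_one₀ hs0 hs1
    calc H nk = s ^ nk.2 * F nk := rfl
      _ ≤ 1 * F nk := mul_le_mul_of_nonneg_right this (hF0 nk)
      _ = F nk := one_mul _
  have hHsumm : Summable H := Summable.of_nonneg_of_le hH0 hHle hFsumm
  have hHslice_summ : ∀ n, Summable (fun k => H (n, k)) := fun n =>
    summable_of_ne_finset_zero (s := Finset.range (n + 1))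
      (fun k hk => by simp [hHdef, hzero n k hk])
  have hHslice_sum : ∀ n, ∑' k, H (n, k) = q n * (s * p + (1 - p)) ^ n := by
    intro n
    rw [tsum_eq_sum (s := Finset.range (n + 1))
      (fun k hk => by simp [hHdef, hzero n k hk])]
    have hbin := add_pow (s * p) (1 - p) n
    have : ∑ k ∈ Finset.range (n + 1), H (n, k)
        = q n * ∑ k ∈ Finset.range (n + 1),
            (s * p) ^ k * (1 - p) ^ (n - k) * (n.choose k : ℝ) := by
      rw [Finset.mul_sum]; apply Finset.sum_congr rfl; intro k _
      simp only [hHdef, hFdef, mul_pow]; ring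
    rw [this, ← hbin]
  have hHcol_summ : ∀ k : ℕ, Summable (fun n => H (n, k)) := fun k =>
    hHsumm.comp_injective (fun a b hab => by simpa using congrArg Prod.fst hab)
  have hHcol_sum : ∀ k, ∑' n, H (n, k) = s ^ k * (p ^ k * A k) := by
    intro k
    rw [hAdef, ← tsum_mul_left, ← tsum_mul_left]
    apply tsum_congr
    intro n
    simp only [hHdef, hFdef]; ring
  have hT_summ : Summable (fun k => s ^ k * (p ^ k * A k)) := by
    have h := ((summable_prod_of_nonneg (f := fun kn : ℕ × ℕ => H (kn.2, kn.1))
      (fun kn => hH0 _)).mp (hHsumm.prod_symm.congr (fun kn => rfl))).2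
    exact h.congr (fun k => hHcol_sum k)
  have hT_sum : ∑' n, q n * (s * p + (1 - p)) ^ n = ∑' k, s ^ k * (p ^ k * A k) := by
    have hswap : ∑' k, ∑' n, H (n, k) = ∑' n, ∑' k, H (n, k) :=
      Summable.tsum_comm' hHsumm hHslice_summ hHcol_summ
    calc ∑' n, q n * (s * p + (1 - p)) ^ n = ∑' n, ∑' k, H (n, k) :=
          tsum_congr (fun n => (hHslice_sum n).symm)
      _ = ∑' k, ∑' n, H (n, k) := hswap.symm
      _ = ∑' k, s ^ k * (p ^ k * A k) := tsum_congr hHcol_sum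
  -- A 0
  have hA0 : ∑' n, q n * (1 - p) ^ n = A 0 := by
    rw [hAdef]
    exact tsum_congr (fun n => by simp)
  -- summability of the outer series
  have hT2 : Summable (fun k => s ^ (k + 2) * (p ^ (k + 2) * A (k + 2))) :=
    (summable_nat_add_iff 2).mpr hT_summ
  have hU2 : Summable (fun k => p ^ (k + 2) * A (k + 2)) :=
    (summable_nat_add_iff 2).mpr hU_summ
  have hRsum : Summable (fun k : ℕ => (s ^ (k + 2) - s) * p ^ (k + 1) * A (k + 2)) := by
    apply ((hT2.sub (hU2.mul_left s)).mul_left (1 / p)).congr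
    intro k
    have hpk : (p : ℝ) ^ (k + 2) = p * p ^ (k + 1) := by ring
    field_simp
    ring
  refine ⟨fun k _ => hA_summ k, hRsum, ?_⟩
  -- compute the right-hand tsum
  have hRtsum : ∑' k : ℕ, (s ^ (k + 2) - s) * p ^ (k + 1) * A (k + 2)
      = (1 / p) * ((∑' k, s ^ k * (p ^ k * A k) - s ^ 0 * (p ^ 0 * A 0) - s ^ 1 * (p ^ 1 * A 1))
        - s * (1 - p ^ 0 * A 0 - p ^ 1 * A 1)) := by
    have e1 : ∀ k : ℕ, (s ^ (k + 2) - s) * p ^ (k + 1) * A (k + 2)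
        = (1 / p) * (s ^ (k + 2) * (p ^ (k + 2) * A (k + 2)) - s * (p ^ (k + 2) * A (k + 2))) := by
      intro k
      field_simp
      ring
    rw [tsum_congr e1, tsum_mul_left]
    congr 1
    rw [Summable.tsum_sub hT2 (hU2.mul_left s), tsum_mul_left]
    rw [tsum_shift2 hT_summ, tsum_shift2 hU_summ, hU_sum]
  rw [hT_sum, hA0, hRtsum]
  field_simp
  ring
end
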